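/- Let B(m,n,h) be defined by B(m,n,0) = m(n+1) and B(m,n,h) = (m+h)(n^3+n^2+n+1) + h(n+1) + B((m+h)n^2,n,h-1) for h ≥ 1, and let C(s) = max{B(m,n,h)+h : m+n = s, 0 ≤ h ≤ n-1}. Then C(s) ≥ (s-1)((s+1)(s^2)^{s-1} + (s^3+s^2+s+1)·θ_{s-1}(s^2)) + (s-1) for all s ≥ 1, where θ_k(t) = 1+t+...+t^{k-1}. -/

import Mathlib

/-- The recursively defined bound `B(m,n,h)` from the paper. -/
def Bfun : ℕ → ℕ → ℕ → ℕ
  | m, n, 0 => m * (n + 1)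
  | m, n, h + 1 =>
      (m + (h + 1)) * (n ^ 3 + n ^ 2 + n + 1) + (h + 1) * (n + 1) +
        Bfun ((m + (h + 1)) * n ^ 2) n h

/-- `θ_k(t) = 1 + t + … + t^{k-1}`. -/
def theta (k t : ℕ) : ℕ := ∑ i ∈ Finset.range k, t ^ i

/-- `C(s) = max{B(m,n,h) + h : m + n = s, 0 ≤ h ≤ n - 1}`. -/
noncomputable def Cfun (s : ℕ) : ℕ :=
  sSup {x : ℕ | ∃ m n h : ℕ, m + n = s ∧ h + 1 ≤ n ∧ x = Bfun m n h + h}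

lemma theta_succ (k t : ℕ) : theta (k + 1) t = 1 + t * theta k t := by
  rw [theta, Finset.sum_range_succ']
  simp only [pow_zero, pow_succ', ← Finset.mul_sum]
  rw [theta]; ring

lemma Bfun_lower (n : ℕ) : ∀ h m : ℕ,
    (m + h) * (n + 1) * (n ^ 2) ^ h +
      (m + h) * ((n ^ 3 + n ^ 2 + n + 1) * theta h (n ^ 2)) ≤ Bfun m n h := by
  intro h
  induction h with
  | zero => intro m; simp [Bfun, theta]
  | succ h ih =>
    intro m
    have key := ih ((m + (h + 1)) * n ^ 2)
    rw [Bfun, theta_succ]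
    have h1 : (m + (h + 1)) * n ^ 2 * (n + 1) * (n ^ 2) ^ h +
        (m + (h + 1)) * n ^ 2 * ((n ^ 3 + n ^ 2 + n + 1) * theta h (n ^ 2)) ≤
        Bfun ((m + (h + 1)) * n ^ 2) n h := by
      refine le_trans ?_ key
      gcongr <;> omega
    rw [pow_succ]
    nlinarith [h1]

lemma mem_aux (s : ℕ) (hs : 1 ≤ s) :
    Bfun 0 s (s - 1) + (s - 1) ∈
      {x : ℕ | ∃ m n h : ℕ, m + n = s ∧ h + 1 ≤ n ∧ x = Bfun m n h + h} := by
  exact ⟨0, s, s - 1, by omega, by omega, rfl⟩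

/-- Lower bound for `C(s)`. -/
theorem Cfun_lower_bound (s : ℕ) (hs : 1 ≤ s) :
    (s - 1) * ((s + 1) * (s ^ 2) ^ (s - 1) +
        (s ^ 3 + s ^ 2 + s + 1) * theta (s - 1) (s ^ 2)) + (s - 1) ≤ Cfun s := by
  have hbdd : BddAbove {x : ℕ | ∃ m n h : ℕ, m + n = s ∧ h + 1 ≤ n ∧ x = Bfun m n h + h} := by
    have hfin : ((fun p : ℕ × ℕ × ℕ => Bfun p.1 p.2.1 p.2.2 + p.2.2) ''
        (Set.Icc 0 s ×ˢ Set.Icc 0 s ×ˢ Set.Icc 0 s)).Finite :=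
      Set.Finite.image _ (((Set.finite_Icc 0 s).prod
        ((Set.finite_Icc 0 s).prod (Set.finite_Icc 0 s))))
    refine (hfin.subset ?_).bddAbove
    rintro x ⟨m, n, h, hmn, hh, rfl⟩
    exact ⟨(m, n, h), ⟨by simp; omega, by simp; omega, by simp; omega⟩, rfl⟩
  have hmem := mem_aux s hs
  have hle := le_csSup hbdd hmem
  refine le_trans ?_ hle
  have := Bfun_lower s (s - 1) 0
  simp only [zero_add] at this
  nlinarith [this]
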